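/- Quantum choice with local coin implements probabilistic choice: with the notation above, let E_P be a trace-preserving completely positive map on H_C (the coin program), ρ a density operator on H_C, and p_i = ⟨i| E_P(ρ) |i⟩. Then for every density operator σ on H: tr_{H_C}( F_total( σ ⊗ E_P(ρ) ) ) = ∑_{i=1}^n p_i · E_i(σ), where F_total(τ) = ∑_{(δ_1,...,δ_n)} F(δ_1,...,δ_n) τ F(δ_1,...,δ_n)† is the channel of the guarded composition of full families {E_{i,δ}}, and E_i(σ) = ∑_δ E_{i,δ} σ E_{i,δ}†. -/

import Mathlib

noncomputable section
open scoped InnerProductSpace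
open Finset

/-- Coordinate model of the tensor product `H_C ⊗ H` along a fixed orthonormal
basis of the `n`-dimensional coin space `H_C`. -/
abbrev TensorSp (n : ℕ) (H : Type*) [NormedAddCommGroup H] [InnerProductSpace ℂ H] : Type _ :=
  PiLp 2 (fun _ : Fin n => H)

variable {n : ℕ} {H : Type*} [NormedAddCommGroup H] [InnerProductSpace ℂ H]

/-- the pure tensor `c ⊗ ψ`. -/
def pureTensor (c : EuclideanSpace ℂ (Fin n)) (ψ : H) : TensorSp n H :=
  WithLp.toLp 2 (fun i => c i • ψ)

/-- the block-diagonal operator `∑ᵢ |i⟩⟨i| ⊗ Uᵢ`, i.e. the guarded composition of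
the `Uᵢ` along the computational basis of the coin space. -/
def blockDiag (U : Fin n → (H →ₗ[ℂ] H)) : TensorSp n H →ₗ[ℂ] TensorSp n H where
  toFun x := WithLp.toLp 2 (fun i => U i (x i))
  map_add' x y := by ext i; simp [map_add]
  map_smul' c x := by ext i; simp [map_smul]

/-- `A ⊗ B` in the coordinate model, `A` acting on the coin space. -/
def tensorOp (A : EuclideanSpace ℂ (Fin n) →ₗ[ℂ] EuclideanSpace ℂ (Fin n))
    (B : H →ₗ[ℂ] H) : TensorSp n H →ₗ[ℂ] TensorSp n H where
  toFun x := WithLp.toLp 2 (fun i => ∑ b : Fin n, A (EuclideanSpace.single b 1) i • B (x b))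
  map_add' x y := by
    ext i; simp [map_add, smul_add, Finset.sum_add_distrib]
  map_smul' c x := by
    ext i; simp [map_smul, Finset.smul_sum, smul_comm c]

/-- `A ⊗ I_H`. -/
def tensorLeft (A : EuclideanSpace ℂ (Fin n) →ₗ[ℂ] EuclideanSpace ℂ (Fin n)) :
    TensorSp n H →ₗ[ℂ] TensorSp n H :=
  tensorOp A LinearMap.id

/-- A linear operator is unitary iff it preserves inner products and is bijective. -/
def IsUnitaryOp {E : Type*} [NormedAddCommGroup E] [InnerProductSpace ℂ E]
    (A : E →ₗ[ℂ] E) : Prop :=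
  (∀ x y : E, ⟪A x, A y⟫_ℂ = ⟪x, y⟫_ℂ) ∧ Function.Bijective A

/-- Positive (semidefinite) operator. -/
def IsPosOp {E : Type*} [NormedAddCommGroup E] [InnerProductSpace ℂ E]
    (A : E →ₗ[ℂ] E) : Prop :=
  ∀ x : E, (⟪x, A x⟫_ℂ).im = 0 ∧ 0 ≤ (⟪x, A x⟫_ℂ).re

/-- Löwner order `A ⊑ B`. -/
def Loewner {E : Type*} [NormedAddCommGroup E] [InnerProductSpace ℂ E]
    (A B : E →ₗ[ℂ] E) : Prop :=
  IsPosOp (B - A)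

section guarded
variable [FiniteDimensional ℂ H] {Δ : Fin n → Type*} [∀ k, Fintype (Δ k)]

/-- the coefficients `λ_{kδ}`. -/
def lam (F : ∀ k, Δ k → (H →ₗ[ℂ] H)) (k : Fin n) (δ : Δ k) : ℝ :=
  Real.sqrt ((LinearMap.trace ℂ H (LinearMap.adjoint (F k δ) ∘ₗ F k δ)).re /
    ∑ τ : Δ k, (LinearMap.trace ℂ H (LinearMap.adjoint (F k τ) ∘ₗ F k τ)).re)

/-- the guarded composition `□ᵢ |i⟩ → Fᵢ` of operator-valued functions, evaluated at
`⊕ᵢ δᵢ`. -/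
def guardedComp (F : ∀ k, Δ k → (H →ₗ[ℂ] H)) (δ : ∀ k, Δ k) :
    TensorSp n H →ₗ[ℂ] TensorSp n H where
  toFun x := WithLp.toLp 2 (fun i => (∏ k ∈ Finset.univ.erase i, lam F k (δ k)) • F i (δ i) (x i))
  map_add' x y := by ext i; simp [map_add, smul_add]
  map_smul' c x := by
    ext i; simp [map_smul, smul_comm c]

end guarded

/-- partial trace over the coin space of an operator on `H_C ⊗ H`. -/
def coinProj (i : Fin n) : TensorSp n H →ₗ[ℂ] H where
  toFun x := x i
  map_add' _ _ := rfl
  map_smul' _ _ := rfl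

def coinIncl (i : Fin n) : H →ₗ[ℂ] TensorSp n H where
  toFun ψ := WithLp.toLp 2 (Pi.single i ψ)
  map_add' x y := by ext j; by_cases h : j = i <;> simp [Pi.single_apply, h]
  map_smul' c x := by ext j; by_cases h : j = i <;> simp [Pi.single_apply, h]

def trCoin (A : TensorSp n H →ₗ[ℂ] TensorSp n H) : H →ₗ[ℂ] H :=
  ∑ i : Fin n, coinProj i ∘ₗ A ∘ₗ coinIncl i

/-- the outer product `|x⟩⟨y|`. -/
def outer {E : Type*} [NormedAddCommGroup E] [InnerProductSpace ℂ E]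
    (x y : E) : E →ₗ[ℂ] E :=
  ((innerSL ℂ y).toLinearMap).smulRight x


section mylemmas

variable {n : ℕ} {H : Type*} [NormedAddCommGroup H] [InnerProductSpace ℂ H]
  [FiniteDimensional ℂ H]

lemma my_trace_eq_sum_inner (T : H →ₗ[ℂ] H) :
    LinearMap.trace ℂ H T =
      ∑ i, ⟪(stdOrthonormalBasis ℂ H) i, T ((stdOrthonormalBasis ℂ H) i)⟫_ℂ := by
  set b := stdOrthonormalBasis ℂ H
  rw [LinearMap.trace_eq_matrix_trace ℂ b.toBasis, Matrix.trace]
  congr 1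
  ext i
  rw [Matrix.diag_apply, LinearMap.toMatrix_apply, OrthonormalBasis.coe_toBasis_repr_apply,
    OrthonormalBasis.repr_apply_apply, OrthonormalBasis.coe_toBasis]

lemma my_trace_adj_comp_re_nonneg (A : H →ₗ[ℂ] H) :
    0 ≤ (LinearMap.trace ℂ H (LinearMap.adjoint A ∘ₗ A)).re := by
  rw [my_trace_eq_sum_inner, Complex.re_sum]
  refine Finset.sum_nonneg fun i _ => ?_
  rw [LinearMap.comp_apply, LinearMap.adjoint_inner_right]
  rw [show (⟪A ((stdOrthonormalBasis ℂ H) i), A ((stdOrthonormalBasis ℂ H) i)⟫_ℂ).re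
      = RCLike.re ⟪A ((stdOrthonormalBasis ℂ H) i), A ((stdOrthonormalBasis ℂ H) i)⟫_ℂ from rfl]
  exact inner_self_nonneg

variable {Δ : Fin n → Type*} [∀ k, Fintype (Δ k)]

lemma my_lam_sq_sum (E : ∀ k, Δ k → (H →ₗ[ℂ] H))
    (hfull : ∀ k, ∑ δ : Δ k, LinearMap.adjoint (E k δ) ∘ₗ E k δ = LinearMap.id)
    [Nontrivial H] (k : Fin n) : ∑ τ : Δ k, (lam E k τ) ^ 2 = 1 := by
  have hD : ∑ τ : Δ k, (LinearMap.trace ℂ H (LinearMap.adjoint (E k τ) ∘ₗ E k τ)).re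
      = (Module.finrank ℂ H : ℝ) := by
    rw [← Complex.re_sum, ← map_sum, hfull k, LinearMap.trace_id]
    simp
  have hDpos : (0 : ℝ) < (Module.finrank ℂ H : ℝ) := by
    exact_mod_cast Module.finrank_pos
  have hterm : ∀ τ : Δ k, (lam E k τ) ^ 2 =
      (LinearMap.trace ℂ H (LinearMap.adjoint (E k τ) ∘ₗ E k τ)).re /
        (Module.finrank ℂ H : ℝ) := by
    intro τ
    rw [lam, Real.sq_sqrt, hD]
    rw [hD]
    exact div_nonneg (my_trace_adj_comp_re_nonneg _) hDpos.le
  rw [Finset.sum_congr rfl fun τ _ => hterm τ, ← Finset.sum_div, hD, div_self hDpos.ne']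

lemma my_sum_pi_smul (h : ∀ k, Δ k → ℝ) (hh : ∀ k, ∑ τ : Δ k, h k τ = 1) (i : Fin n)
    {M : Type*} [AddCommMonoid M] [Module ℝ M] (v : Δ i → M) :
    ∑ δ : (∀ k, Δ k), (∏ k ∈ Finset.univ.erase i, h k (δ k)) • v (δ i)
      = ∑ τ : Δ i, v τ := by
  classical
  rw [← Equiv.sum_comp (Equiv.piSplitAt i Δ).symm
      (fun δ => (∏ k ∈ Finset.univ.erase i, h k (δ k)) • v (δ i))]
  rw [Fintype.sum_prod_type]
  have key : ∀ (τ : Δ i) (r : ∀ j : { j // j ≠ i }, Δ j),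
      (∏ k ∈ Finset.univ.erase i, h k ((Equiv.piSplitAt i Δ).symm (τ, r) k))
        = ∏ j : { j // j ≠ i }, h j (r j) := by
    intro τ r
    rw [eq_comm, Finset.prod_subtype (p := fun k => k ≠ i) (Finset.univ.erase i)
      (fun k => by simp [Finset.mem_erase]) (fun k => h k ((Equiv.piSplitAt i Δ).symm (τ, r) k))]
    refine Finset.prod_congr rfl fun j _ => ?_
    congr 1
    simp [Equiv.piSplitAt_symm_apply, j.2]
  have keyi : ∀ (τ : Δ i) (r : ∀ j : { j // j ≠ i }, Δ j),
      (Equiv.piSplitAt i Δ).symm (τ, r) i = τ := by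
    intro τ r; simp [Equiv.piSplitAt_symm_apply]
  refine Finset.sum_congr rfl fun τ _ => ?_
  rw [Finset.sum_congr rfl fun r _ => by rw [key τ r, keyi τ r]]
  rw [← Finset.sum_smul]
  have hone : (∑ r : ∀ j : { j // j ≠ i }, Δ j, ∏ j : { j // j ≠ i }, h j (r j)) = 1 := by
    rw [← Fintype.piFinset_univ,
      ← Finset.prod_univ_sum (fun _ => Finset.univ) (fun (j : { j // j ≠ i }) τ => h j τ)]
    rw [Finset.prod_congr rfl fun (j : { j // j ≠ i }) _ => hh (j : Fin n)]
    exact Finset.prod_const_one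
  rw [hone, one_smul]

lemma my_adjoint_guarded (E : ∀ k, Δ k → (H →ₗ[ℂ] H)) (δ : ∀ k, Δ k)
    (x : TensorSp n H) (j : Fin n) :
    (LinearMap.adjoint (guardedComp E δ)) x j =
      (∏ k ∈ Finset.univ.erase j, lam E k (δ k)) • (LinearMap.adjoint (E j (δ j))) (x j) := by
  have : LinearMap.adjoint (guardedComp E δ) =
      ({ toFun := fun x => WithLp.toLp 2 (fun j =>
            (∏ k ∈ Finset.univ.erase j, lam E k (δ k)) • (LinearMap.adjoint (E j (δ j))) (x j))
         map_add' := fun x y => by ext j; simp [map_add, smul_add]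
         map_smul' := fun c x => by
            ext j; simp [map_smul, smul_comm c] } : TensorSp n H →ₗ[ℂ] TensorSp n H) := by
    rw [eq_comm, LinearMap.eq_adjoint_iff]
    intro x y
    simp only [LinearMap.coe_mk, AddHom.coe_mk, PiLp.inner_apply, guardedComp]
    refine Finset.sum_congr rfl fun j _ => ?_
    rw [show (∏ k ∈ Finset.univ.erase j, lam E k (δ k)) •
          (LinearMap.adjoint (E j (δ j))) (x j)
        = (↑(∏ k ∈ Finset.univ.erase j, lam E k (δ k)) : ℂ) •
          (LinearMap.adjoint (E j (δ j))) (x j) from (Complex.coe_smul _ _).symm,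
      inner_smul_left, Complex.conj_ofReal, LinearMap.adjoint_inner_left,
      show (∏ k ∈ Finset.univ.erase j, lam E k (δ k)) • (E j (δ j)) (y j)
        = (↑(∏ k ∈ Finset.univ.erase j, lam E k (δ k)) : ℂ) • (E j (δ j)) (y j)
        from (Complex.coe_smul _ _).symm,
      inner_smul_right]
  rw [this]
  rfl

lemma my_pointwise (E : ∀ k, Δ k → (H →ₗ[ℂ] H)) (δ : ∀ k, Δ k)
    (A : EuclideanSpace ℂ (Fin n) →ₗ[ℂ] EuclideanSpace ℂ (Fin n)) (σ : H →ₗ[ℂ] H)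
    (i : Fin n) (ψ : H) :
    ((guardedComp E δ ∘ₗ tensorOp A σ ∘ₗ LinearMap.adjoint (guardedComp E δ))
        (coinIncl i ψ)) i
      = (∏ k ∈ Finset.univ.erase i, (lam E k (δ k)) ^ 2) •
          ((A (EuclideanSpace.single i 1) i) •
            (E i (δ i)) (σ ((LinearMap.adjoint (E i (δ i))) ψ))) := by
  classical
  simp only [LinearMap.comp_apply]
  have hne : ∀ b : Fin n, b ≠ i → (coinIncl i ψ) b = 0 := fun b hb =>
    show (Pi.single i ψ : ∀ _ : Fin n, H) b = 0 from Pi.single_eq_of_ne (M := fun _ : Fin n => H) hb ψ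
  have hi : (coinIncl i ψ) i = ψ :=
    show (Pi.single i ψ : ∀ _ : Fin n, H) i = ψ from Pi.single_eq_same (M := fun _ : Fin n => H) i ψ
  have hadj : ∀ j, (LinearMap.adjoint (guardedComp E δ)) (coinIncl i ψ) j
      = (∏ k ∈ Finset.univ.erase j, lam E k (δ k)) •
          (LinearMap.adjoint (E j (δ j))) ((coinIncl i ψ) j) := fun j =>
    my_adjoint_guarded E δ _ j
  have hG : ∀ (x : TensorSp n H),
      (guardedComp E δ) x i = (∏ k ∈ Finset.univ.erase i, lam E k (δ k)) • E i (δ i) (x i) :=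
    fun x => rfl
  have hT : ∀ (x : TensorSp n H),
      (tensorOp A σ) x i = ∑ b : Fin n, A (EuclideanSpace.single b 1) i • σ (x b) :=
    fun x => rfl
  rw [hG, hT]
  have hcollapse : ∀ b : Fin n, b ≠ i →
      A (EuclideanSpace.single b 1) i •
        σ ((LinearMap.adjoint (guardedComp E δ)) (coinIncl i ψ) b) = 0 := by
    intro b hb
    rw [hadj b, hne b hb]
    simp
  rw [Finset.sum_eq_single i (fun b _ hb => hcollapse b hb) (by simp)]
  rw [hadj i, hi]
  rw [LinearMap.map_smul_of_tower σ, map_smul (E i (δ i)),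
    LinearMap.map_smul_of_tower (E i (δ i)),
    smul_comm (A (EuclideanSpace.single i 1) i) (∏ k ∈ Finset.univ.erase i, lam E k (δ k)),
    smul_smul]
  congr 1
  rw [← Finset.prod_mul_distrib]
  exact Finset.prod_congr rfl fun k _ => (sq (lam E k (δ k))).symm

end mylemmas

/-- quantum choice with a local coin implements probabilistic choice:
`tr_{H_C}(F_total(σ ⊗ E_P(ρ))) = ∑ᵢ pᵢ · Eᵢ(σ)` with `pᵢ = ⟨i|E_P(ρ)|i⟩`, where the
coin program `E_P` is given by Kraus operators `K j`. -/
theorem quantum_choice_implements_probabilistic_choice {n : ℕ} {H : Type*}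
    [NormedAddCommGroup H] [InnerProductSpace ℂ H] [FiniteDimensional ℂ H]
    {Δ : Fin n → Type*} [∀ k, Fintype (Δ k)] (E : ∀ k, Δ k → (H →ₗ[ℂ] H))
    (hfull : ∀ k, ∑ δ : Δ k, LinearMap.adjoint (E k δ) ∘ₗ E k δ = LinearMap.id)
    {m : ℕ} (K : Fin m → (EuclideanSpace ℂ (Fin n) →ₗ[ℂ] EuclideanSpace ℂ (Fin n)))
    (hK : ∑ j : Fin m, LinearMap.adjoint (K j) ∘ₗ K j = LinearMap.id)
    (ρ : EuclideanSpace ℂ (Fin n) →ₗ[ℂ] EuclideanSpace ℂ (Fin n))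
    (hρ : IsPosOp ρ) (hρtr : LinearMap.trace ℂ _ ρ = 1)
    (σ : H →ₗ[ℂ] H) (hσ : IsPosOp σ) (hσtr : LinearMap.trace ℂ H σ = 1) :
    trCoin (∑ δ : (∀ k, Δ k),
        guardedComp E δ ∘ₗ
          tensorOp (∑ j : Fin m, K j ∘ₗ ρ ∘ₗ LinearMap.adjoint (K j)) σ ∘ₗ
          LinearMap.adjoint (guardedComp E δ))
      = ∑ i : Fin n,
          ⟪EuclideanSpace.single i (1 : ℂ),
            (∑ j : Fin m, K j ∘ₗ ρ ∘ₗ LinearMap.adjoint (K j))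
              (EuclideanSpace.single i (1 : ℂ))⟫_ℂ •
          (∑ δi : Δ i, E i δi ∘ₗ σ ∘ₗ LinearMap.adjoint (E i δi)) := by
  classical
  rcases subsingleton_or_nontrivial H with hS | hN
  · exact Subsingleton.elim _ _
  apply LinearMap.ext; intro ψ
  rw [trCoin, LinearMap.sum_apply]
  set A : EuclideanSpace ℂ (Fin n) →ₗ[ℂ] EuclideanSpace ℂ (Fin n) :=
    ∑ j : Fin m, K j ∘ₗ ρ ∘ₗ LinearMap.adjoint (K j) with hA
  calc (∑ i : Fin n, (coinProj i ∘ₗ (∑ δ : (∀ k, Δ k), guardedComp E δ ∘ₗ tensorOp A σ ∘ₗ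
          LinearMap.adjoint (guardedComp E δ)) ∘ₗ coinIncl i) ψ)
      = ∑ i : Fin n, ∑ δ : (∀ k, Δ k),
          ((guardedComp E δ ∘ₗ tensorOp A σ ∘ₗ LinearMap.adjoint (guardedComp E δ))
            (coinIncl i ψ)) i := by
        refine Finset.sum_congr rfl fun i _ => ?_
        rw [LinearMap.comp_apply, LinearMap.comp_apply, LinearMap.sum_apply,
          map_sum (coinProj i)]
        rfl
    _ = ∑ i : Fin n, ∑ δ : (∀ k, Δ k),
          (∏ k ∈ Finset.univ.erase i, (lam E k (δ k)) ^ 2) •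
            ((A (EuclideanSpace.single i 1) i) •
              (E i (δ i)) (σ ((LinearMap.adjoint (E i (δ i))) ψ))) := by
        refine Finset.sum_congr rfl fun i _ => Finset.sum_congr rfl fun δ _ => ?_
        exact my_pointwise E δ A σ i ψ
    _ = ∑ i : Fin n, ∑ τ : Δ i,
          (A (EuclideanSpace.single i 1) i) •
            (E i τ) (σ ((LinearMap.adjoint (E i τ)) ψ)) := by
        refine Finset.sum_congr rfl fun i _ => ?_
        exact my_sum_pi_smul (fun k τ => (lam E k τ) ^ 2) (my_lam_sq_sum E hfull) i
          (fun τ => (A (EuclideanSpace.single i 1) i) •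
            (E i τ) (σ ((LinearMap.adjoint (E i τ)) ψ)))
    _ = _ := by
        rw [LinearMap.sum_apply]
        refine Finset.sum_congr rfl fun i _ => ?_
        rw [EuclideanSpace.inner_single_left]
        simp only [map_one, one_mul, LinearMap.smul_apply, LinearMap.sum_apply,
          LinearMap.comp_apply, Finset.smul_sum]
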